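/- Let G be a group and K a subgroup such that the conjugacy class x^G is finite with |x^G| ≤ n for every x ∈ K. If moreover |K| ≤ j, then the normal closure ⟨K^G⟩ is finite, of order bounded by a function of n and j. -/

import Mathlib

open Subgroup

/-- Extraction lemma: pull all occurrences of `s` to the front of a product. -/
lemma dietzmann_extract {G : Type} [Group G] [DecidableEq G] {S : Set G}
    (hconj : ∀ (g : G), ∀ x ∈ S, g * x * g⁻¹ ∈ S) (s : G) :
    ∀ l : List G, (∀ x ∈ l, x ∈ S) →
      ∃ l' : List G, (∀ x ∈ l', x ∈ S) ∧ l'.length + l.count s = l.length ∧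
        l.prod = s ^ l.count s * l'.prod := by
  intro l
  induction l with
  | nil => exact fun _ => ⟨[], by simp, by simp, by simp⟩
  | cons x t ih =>
    intro hmem
    obtain ⟨l₁, hl₁, hlen, hprod⟩ := ih (fun y hy => hmem y (List.mem_cons_of_mem _ hy))
    by_cases hx : x = s
    · subst hx
      refine ⟨l₁, hl₁, ?_, ?_⟩
      · simp only [List.count_cons_self, List.length_cons]; omega
      · simp only [List.prod_cons, List.count_cons_self, hprod, pow_succ']
        group
    · have hcnt : (x :: t).count s = t.count s := by
        simp [List.count_cons, hx]
      set c := t.count s with hc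
      refine ⟨((s ^ c)⁻¹ * x * s ^ c) :: l₁, ?_, ?_, ?_⟩
      · intro y hy
        rcases List.mem_cons.mp hy with rfl | hy
        · have := hconj (s ^ c)⁻¹ x (hmem x (List.mem_cons_self))
          simpa using this
        · exact hl₁ y hy
      · simp only [List.length_cons, hcnt]; omega
      · rw [hcnt, List.prod_cons, List.prod_cons, hprod]
        group

/-- Reduction lemma: every product of elements of a finite conjugation-closed set of
elements of order dividing `d` equals a product of boundedly many elements. -/
lemma dietzmann_reduce {G : Type} [Group G] [DecidableEq G] {S : Set G} (hS : S.Finite)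
    (hconj : ∀ (g : G), ∀ x ∈ S, g * x * g⁻¹ ∈ S) {d : ℕ} (hd : 0 < d)
    (hord : ∀ x ∈ S, x ^ d = 1) :
    ∀ (N : ℕ) (l : List G), l.length ≤ N → (∀ x ∈ l, x ∈ S) →
      ∃ l' : List G, (∀ x ∈ l', x ∈ S) ∧ l'.length ≤ (d - 1) * S.ncard ∧
        l.prod = l'.prod := by
  classical
  intro N
  induction N with
  | zero =>
    intro l h hl
    exact ⟨l, hl, by omega, rfl⟩
  | succ N ih =>
    intro l hlen hl
    by_cases hbig : l.length ≤ (d - 1) * S.ncard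
    · exact ⟨l, hl, hbig, rfl⟩
    · push_neg at hbig
      have hpig : ∃ s ∈ S, d ≤ l.count s := by
        by_contra h
        push_neg at h
        have hsum : ∑ a ∈ l.toFinset, l.count a = l.length := by
          simpa using Multiset.toFinset_sum_count_eq (l : Multiset G)
        have hsub : l.toFinset ⊆ hS.toFinset := by
          intro a ha
          exact hS.mem_toFinset.mpr (hl a (List.mem_toFinset.mp ha))
        have hle : l.length ≤ l.toFinset.card * (d - 1) := by
          rw [← hsum]
          calc ∑ a ∈ l.toFinset, l.count a ≤ ∑ _a ∈ l.toFinset, (d - 1) := by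
                refine Finset.sum_le_sum fun a ha => ?_
                have := h a (hl a (List.mem_toFinset.mp ha))
                omega
            _ = l.toFinset.card * (d - 1) := by simp [Finset.sum_const, mul_comm]
        have hcard : l.toFinset.card ≤ S.ncard := by
          rw [Set.ncard_eq_toFinset_card S hS]
          exact Finset.card_mono hsub
        have : l.length ≤ (d - 1) * S.ncard := by
          calc l.length ≤ l.toFinset.card * (d - 1) := hle
            _ ≤ S.ncard * (d - 1) := Nat.mul_le_mul_right _ hcard
            _ = (d - 1) * S.ncard := Nat.mul_comm _ _
        omega
      obtain ⟨s, hsS, hcount⟩ := hpig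
      obtain ⟨l₁, hl₁S, hlen₁, hprod⟩ := dietzmann_extract hconj s l hl
      set c := l.count s with hc
      have hpow : s ^ c = s ^ (c % d) := by
        conv_lhs => rw [← Nat.div_add_mod c d]
        rw [pow_add, pow_mul, hord s hsS, one_pow, one_mul]
      have hmod : c % d < d := Nat.mod_lt _ hd
      set l₂ : List G := List.replicate (c % d) s ++ l₁ with hl₂
      have hmem₂ : ∀ x ∈ l₂, x ∈ S := by
        intro x hx
        rcases List.mem_append.mp hx with hx | hx
        · rw [List.eq_of_mem_replicate hx]; exact hsS
        · exact hl₁S x hx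
      have hlen₂ : l₂.length ≤ N := by
        simp only [hl₂, List.length_append, List.length_replicate]
        omega
      obtain ⟨l', hl', hlenf, hprodf⟩ := ih l₂ hlen₂ hmem₂
      refine ⟨l', hl', hlenf, ?_⟩
      rw [hprod, ← hprodf, hl₂, List.prod_append, List.prod_replicate, ← hpow]

lemma ofFn_get_cast {α : Type*} (l : List α) (B : ℕ) (hB : l.length = B) :
    List.ofFn (fun i : Fin B => l.get (Fin.cast hB.symm i)) = l := by
  subst hB
  simp

/-- Dietzmann-type lemma: if every element of a subgroup `K` has `G`-conjugacy class
of size at most `n`, and `|K| ≤ j`, then the normal closure of `K` is finite of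
`(n, j)`-bounded order. -/
theorem stmt_0 :
    ∃ f : ℕ → ℕ → ℕ, ∀ n j : ℕ, ∀ (G : Type) [Group G] (K : Subgroup G),
      (∀ x ∈ K, (conjugatesOf x).Finite ∧ Nat.card (conjugatesOf x) ≤ n) →
      Finite K → Nat.card K ≤ j →
      Finite (Subgroup.normalClosure (K : Set G)) ∧
        Nat.card (Subgroup.normalClosure (K : Set G)) ≤ f n j := by
  classical
  refine ⟨fun n j => (n * j + 1) ^ (n * j * j), fun n j G _ K hcc hKfin hKcard => ?_⟩
  set S : Set G := Group.conjugatesOfSet (K : Set G) with hSdef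
  -- basic facts about K
  have hKset : (K : Set G).Finite := Set.toFinite _
  set d : ℕ := Nat.card K with hddef
  have hd : 0 < d := Nat.card_pos
  have hdj : d ≤ j := hKcard
  -- S is finite
  have hSfin : S.Finite := Set.Finite.biUnion hKset fun a ha => (hcc a ha).1
  -- S is conjugation-closed
  have hSconj : ∀ (g : G), ∀ x ∈ S, g * x * g⁻¹ ∈ S := fun g x hx =>
    Group.conj_mem_conjugatesOfSet hx
  -- S is inverse-closed
  have hSinv : ∀ x ∈ S, x⁻¹ ∈ S := by
    intro x hx
    obtain ⟨a, ha, hax⟩ := Group.mem_conjugatesOfSet_iff.mp hx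
    obtain ⟨c, rfl⟩ := isConj_iff.mp hax
    refine Group.mem_conjugatesOfSet_iff.mpr ⟨a⁻¹, inv_mem ha, isConj_iff.mpr ⟨c, ?_⟩⟩
    group
  -- every element of S has order dividing d
  have hord : ∀ x ∈ S, x ^ d = 1 := by
    intro x hx
    obtain ⟨a, ha, hax⟩ := Group.mem_conjugatesOfSet_iff.mp hx
    obtain ⟨c, rfl⟩ := isConj_iff.mp hax
    have h1 : (⟨a, ha⟩ : K) ^ d = 1 := pow_card_eq_one'
    have h2 : a ^ d = 1 := by
      have := congrArg (Subtype.val) h1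
      simpa using this
    rw [conj_pow, h2, mul_one, mul_inv_cancel]
  -- |S| ≤ n * j
  have hScard : S.ncard ≤ n * j := by
    set g : G → Finset G := fun a => if h : a ∈ K then ((hcc a h).1).toFinset else ∅ with hg
    set F : Finset G := hKset.toFinset.biUnion g with hF
    have hSsub : S ⊆ ↑F := by
      intro x hx
      obtain ⟨a, ha, hax⟩ := Group.mem_conjugatesOfSet_iff.mp hx
      refine Finset.mem_coe.mpr (Finset.mem_biUnion.mpr ⟨a, hKset.mem_toFinset.mpr ha, ?_⟩)
      have haK : a ∈ K := ha
      show x ∈ g a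
      rw [hg]
      simp only [dif_pos haK]
      exact ((hcc a haK).1).mem_toFinset.mpr hax
    have h1 : S.ncard ≤ F.card := by
      have := Set.ncard_le_ncard hSsub (F.finite_toSet)
      simpa using this
    have h2 : F.card ≤ hKset.toFinset.card * n := by
      refine (Finset.card_biUnion_le).trans ?_
      calc ∑ a ∈ hKset.toFinset, (g a).card ≤ ∑ _a ∈ hKset.toFinset, n := by
            refine Finset.sum_le_sum fun a ha => ?_
            have haK : a ∈ K := hKset.mem_toFinset.mp ha
            simp only [hg, dif_pos haK]
            have := (hcc a haK).2
            rwa [Nat.card_coe_set_eq, Set.ncard_eq_toFinset_card _ (hcc a haK).1] at this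
        _ = hKset.toFinset.card * n := by simp [Finset.sum_const, mul_comm]
    have h3 : hKset.toFinset.card ≤ j := by
      rw [← Set.ncard_eq_toFinset_card _ hKset, ← Nat.card_coe_set_eq]
      exact hKcard
    calc S.ncard ≤ hKset.toFinset.card * n := h1.trans h2
      _ ≤ j * n := Nat.mul_le_mul_right _ h3
      _ = n * j := Nat.mul_comm _ _
  -- the padded generating set
  set S1 : Set G := insert 1 S with hS1
  have hS1fin : S1.Finite := hSfin.insert 1
  haveI : Finite ↥S1 := hS1fin.to_subtype
  set B : ℕ := n * j * j with hB
  set f : (Fin B → ↥S1) → G := fun a => (List.ofFn fun i => ((a i : G))).prod with hf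
  -- every element of the normal closure is in the range of f
  have hNC : Subgroup.normalClosure (K : Set G) = Subgroup.closure S := rfl
  have hsub : (Subgroup.normalClosure (K : Set G) : Set G) ⊆ Set.range f := by
    intro x hx
    rw [hNC] at hx
    have hx' : x ∈ (Subgroup.closure S).toSubmonoid := hx
    rw [Subgroup.closure_toSubmonoid] at hx'
    have hU : S ∪ S⁻¹ = S := by
      apply Set.Subset.antisymm
      · rintro y (hy | hy)
        · exact hy
        · have := hSinv y⁻¹ hy
          simpa using this
      · exact Set.subset_union_left
    rw [hU] at hx'
    obtain ⟨l, hlS, hlprod⟩ := Submonoid.exists_list_of_mem_closure hx'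
    obtain ⟨l', hl'S, hl'len, hl'prod⟩ :=
      dietzmann_reduce hSfin hSconj hd hord l.length l le_rfl hlS
    have hlenB : l'.length ≤ B := by
      refine hl'len.trans ?_
      calc (d - 1) * S.ncard ≤ j * (n * j) := Nat.mul_le_mul (by omega) hScard
        _ = B := by rw [hB]; ring
    -- pad l' to length B with 1's
    set l'' : List G := l' ++ List.replicate (B - l'.length) 1 with hl''
    have hlen'' : l''.length = B := by
      simp only [hl'', List.length_append, List.length_replicate]
      omega
    have hmem'' : ∀ y ∈ l'', y ∈ S1 := by
      intro y hy
      rcases List.mem_append.mp hy with hy | hy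
      · exact Set.mem_insert_of_mem _ (hl'S y hy)
      · rw [List.eq_of_mem_replicate hy]
        exact Set.mem_insert _ _
    refine ⟨fun i => ⟨l''.get (Fin.cast hlen''.symm i), hmem'' _ (List.get_mem _ _)⟩, ?_⟩
    have : (List.ofFn fun i : Fin B =>
        ((⟨l''.get (Fin.cast hlen''.symm i), hmem'' _ (List.get_mem _ _)⟩ : ↥S1) : G)) = l'' := by
      exact ofFn_get_cast l'' B hlen''
    rw [hf]
    simp only [this]
    rw [hl'', List.prod_append, List.prod_replicate, one_pow, mul_one, ← hl'prod, hlprod]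
  -- conclude
  have hrfin : (Set.range f).Finite := Set.finite_range f
  have hfin : (Subgroup.normalClosure (K : Set G) : Set G).Finite := hrfin.subset hsub
  refine ⟨hfin.to_subtype, ?_⟩
  calc Nat.card (Subgroup.normalClosure (K : Set G))
      ≤ Nat.card (Set.range f) := Nat.card_mono hrfin hsub
    _ ≤ Nat.card (Fin B → ↥S1) := Finite.card_range_le f
    _ = Nat.card ↥S1 ^ B := by rw [Nat.card_fun]; simp
    _ ≤ (n * j + 1) ^ B := by
        refine Nat.pow_le_pow_left ?_ _
        rw [Nat.card_coe_set_eq, hS1]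
        exact (Set.ncard_insert_le _ _).trans (by omega)
    _ = (n * j + 1) ^ (n * j * j) := by rw [hB]
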